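/- Let S ∈ ℂ[z] be a polynomial of degree n ≥ 1 all of whose roots lie in the closed disk of radius R₀ ≥ 0 centered at z₀ ∈ ℂ. Then for every z ∈ ℂ with |z − z₀| > R₀ one has n·|S(z)| ≤ 2·|z − z₀|·|S′(z)|. -/

import Mathlib

open Polynomial

lemma half_le_re_div (d e : ℂ) (h : ‖d - e‖ < ‖d‖) :
    (1:ℝ)/2 ≤ (d / e).re := by
  have hd : d ≠ 0 := by
    rintro rfl
    simp only [norm_zero] at h
    exact absurd h (not_lt.2 (norm_nonneg _))
  have he : e ≠ 0 := by
    rintro rfl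
    rw [sub_zero] at h
    exact lt_irrefl _ h
  set w : ℂ := (d - e) / d with hw
  have hwabs : ‖w‖ < 1 := by
    rw [hw, norm_div]
    exact (div_lt_one (norm_pos_iff.mpr hd)).2 h
  have h1w : (1 : ℂ) - w ≠ 0 := by
    intro h0
    have : w = 1 := by linear_combination -h0
    simp [this] at hwabs
  have hde : d / e = (1 - w)⁻¹ := by
    have hew : e = d * (1 - w) := by rw [hw]; field_simp; ring
    rw [hew]
    field_simp
  rw [hde, Complex.inv_re]
  have hre : w.re < 1 := lt_of_le_of_lt (Complex.re_le_norm w) hwabs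
  have h2 : w.re ^ 2 + w.im ^ 2 < 1 := by
    have h3 : ‖w‖ ^ 2 < 1 := by nlinarith [norm_nonneg w]
    rw [Complex.sq_norm, Complex.normSq_apply] at h3
    nlinarith
  have hns : Complex.normSq (1 - w) = (1 - w.re) ^ 2 + w.im ^ 2 := by
    simp [Complex.normSq_apply, Complex.sub_re, Complex.sub_im]
    ring
  have hpos : 0 < Complex.normSq (1 - w) := Complex.normSq_pos.2 h1w
  have hre1 : (1 - w).re = 1 - w.re := by simp
  rw [hre1, le_div_iff₀ hpos, hns]
  nlinarith

theorem stmt_15 (S : Polynomial ℂ) (n : ℕ) (hn : 1 ≤ n) (hdeg : S.degree = (n : ℕ))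
    (z₀ : ℂ) (R₀ : ℝ) (hR₀ : 0 ≤ R₀)
    (hroots : ∀ w : ℂ, S.eval w = 0 → ‖w - z₀‖ ≤ R₀)
    (z : ℂ) (hz : R₀ < ‖z - z₀‖) :
    (n : ℝ) * ‖S.eval z‖ ≤
      2 * ‖z - z₀‖ * ‖(Polynomial.derivative S).eval z‖ := by
  classical
  have hS0 : S ≠ 0 := fun h => by simp [h] at hdeg
  have hnat : S.natDegree = n := natDegree_eq_of_degree_eq_some hdeg
  have hcard : Multiset.card S.roots = S.natDegree :=
    splits_iff_card_roots.1 (IsAlgClosed.splits S)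
  set t := S.roots with ht
  set a := S.leadingCoeff with ha
  have hfac : C a * (t.map fun r => X - C r).prod = S :=
    C_leadingCoeff_mul_prod_multiset_X_sub_C hcard
  have hmem : ∀ r ∈ t, ‖r - z₀‖ ≤ R₀ := by
    intro r hr
    exact hroots r ((mem_roots hS0).1 hr)
  have hevalS : S.eval z = a * (t.map fun r => z - r).prod := by
    conv_lhs => rw [← hfac]
    rw [eval_mul, eval_C, eval_multiset_prod, Multiset.map_map]
    simp
  have hevalS' : (derivative S).eval z
      = a * (t.map fun r => ((t.erase r).map fun s => z - s).prod).sum := by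
    conv_lhs => rw [← hfac]
    rw [derivative_mul, derivative_C, zero_mul, zero_add, eval_mul, eval_C, derivative_prod]
    congr 1
    rw [show ∀ (s : Multiset ℂ[X]), eval z s.sum = (s.map (eval z)).sum from fun s => by
      simpa using map_multiset_sum (evalRingHom z) s, Multiset.map_map]
    congr 1
    apply Multiset.map_congr rfl
    intro r _
    simp only [Function.comp_apply, derivative_X_sub_C, mul_one, eval_multiset_prod,
      Multiset.map_map]
    simp
  set F : ℂ → ℂ := fun r => (z - z₀) / (z - r) with hF
  have hzr : ∀ r ∈ t, z - r ≠ 0 := by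
    intro r hr h0
    have : z = r := by linear_combination h0
    subst this
    exact absurd (hmem z hr) (not_le.2 hz)
  have hterm : ∀ r ∈ t, (z - z₀) * ((t.erase r).map fun s => z - s).prod
      = (t.map fun s => z - s).prod * F r := by
    intro r hr
    have h0 := hzr r hr
    have hp : (t.map fun s => z - s).prod
        = (z - r) * ((t.erase r).map fun s => z - s).prod :=
      (Multiset.prod_map_erase (f := fun s => z - s) hr).symm
    rw [hF]
    field_simp
    linear_combination (-(z - z₀)) * hp
  have hkey : (z - z₀) * (derivative S).eval z = S.eval z * (t.map F).sum := by
    rw [hevalS, hevalS']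
    calc (z - z₀) * (a * (t.map fun r => ((t.erase r).map fun s => z - s).prod).sum)
        = a * (t.map fun r => (z - z₀) * ((t.erase r).map fun s => z - s).prod).sum := by
          rw [Multiset.sum_map_mul_left]; ring
      _ = a * (t.map fun r => (t.map fun s => z - s).prod * F r).sum := by
          congr 1
          exact congrArg Multiset.sum (Multiset.map_congr rfl hterm)
      _ = a * (t.map fun s => z - s).prod * (t.map F).sum := by
          rw [Multiset.sum_map_mul_left]; ring
  have hre : (n : ℝ) / 2 ≤ ((t.map F).sum).re := by
    have hmap : ((t.map F).sum).re = (t.map fun r => (F r).re).sum := by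
      have h1 := map_multiset_sum Complex.reAddGroupHom (t.map F)
      simpa [Multiset.map_map, Function.comp] using h1
    rw [hmap]
    have hbound : ∀ x ∈ t.map fun r => (F r).re, (1:ℝ)/2 ≤ x := by
      intro x hx
      obtain ⟨r, hr, rfl⟩ := Multiset.mem_map.1 hx
      apply half_le_re_div
      have hrw : z - z₀ - (z - r) = r - z₀ := by ring
      rw [hrw]
      exact lt_of_le_of_lt (hmem r hr) hz
    have hs := Multiset.card_nsmul_le_sum hbound
    rw [Multiset.card_map, hcard, hnat, nsmul_eq_mul] at hs
    linarith
  have habs : (n : ℝ) / 2 ≤ ‖(t.map F).sum‖ :=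
    le_trans hre (Complex.re_le_norm _)
  calc (n : ℝ) * ‖S.eval z‖
      = 2 * ((n:ℝ)/2) * ‖S.eval z‖ := by ring
    _ ≤ 2 * ‖(t.map F).sum‖ * ‖S.eval z‖ := by
        apply mul_le_mul_of_nonneg_right _ (norm_nonneg _)
        linarith
    _ = 2 * ‖S.eval z * (t.map F).sum‖ := by rw [norm_mul]; ring
    _ = 2 * ‖(z - z₀) * (derivative S).eval z‖ := by rw [hkey]
    _ = 2 * ‖z - z₀‖ * ‖(derivative S).eval z‖ := by
        rw [norm_mul]; ring
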